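/- Let c_α > 0 and x_c > 0 be fixed. Suppose (A_T)_{T≥1} and (B_T)_{T≥1} are sequences of nonnegative reals satisfying c_α·A_T + B_T = 1 for all T, and A_{T+1} - A_T ≤ x_c·(B_{T+1})^2 for all T. Then B_T ≥ min(B_1, 1/(c_α·x_c)) / T for every T ≥ 1, and in particular if B_1 > 0 then the series Σ_T B_T diverges. -/

import Mathlib

/-- The key inductive estimate: if `c_α·A_T + B_T = 1` and
`A_{T+1} - A_T ≤ x_c·B_{T+1}²` for all `T ≥ 1`, with `A_T, B_T ≥ 0`, then
`B_T ≥ min(B_1, 1/(c_α x_c))/T` for all `T ≥ 1`; in particular if `B_1 > 0` the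
series `Σ B_T` diverges. -/
theorem bridge_lower_bound (cα xc : ℝ) (hcα : 0 < cα) (hxc : 0 < xc)
    (A B : ℕ → ℝ)
    (hA : ∀ T : ℕ, 1 ≤ T → 0 ≤ A T) (hB : ∀ T : ℕ, 1 ≤ T → 0 ≤ B T)
    (hid : ∀ T : ℕ, 1 ≤ T → cα * A T + B T = 1)
    (hrec : ∀ T : ℕ, 1 ≤ T → A (T + 1) - A T ≤ xc * B (T + 1) ^ 2) :
    (∀ T : ℕ, 1 ≤ T → min (B 1) (1 / (cα * xc)) / (T : ℝ) ≤ B T) ∧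
    (0 < B 1 → ¬ Summable B) := by
  have hcx : 0 < cα * xc := mul_pos hcα hxc
  set m := min (B 1) (1 / (cα * xc)) with hm
  have hmle : cα * xc * m ≤ 1 := by
    have : m ≤ 1 / (cα * xc) := min_le_right _ _
    rw [le_div_iff₀ hcx] at this
    linarith [this]
  have hstep : ∀ T : ℕ, 1 ≤ T → B T - B (T + 1) ≤ cα * xc * B (T + 1) ^ 2 := by
    intro T hT
    have h1 := hid T hT
    have h2 := hid (T + 1) (le_trans hT (Nat.le_succ T))
    have h3 := hrec T hT
    nlinarith
  have hmain : ∀ T : ℕ, 1 ≤ T → m / (T : ℝ) ≤ B T := by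
    intro T hT
    induction T, hT using Nat.le_induction with
    | base =>
      simp only [Nat.cast_one, div_one]
      exact min_le_left _ _
    | succ T hT ih =>
      by_contra hlt
      push_neg at hlt
      have hBT1 : 0 ≤ B (T + 1) := hB _ (by omega)
      have hTpos : (0 : ℝ) < (T : ℝ) := by exact_mod_cast hT
      have hT1pos : (0 : ℝ) < (T : ℝ) + 1 := by linarith
      have hcast : ((T + 1 : ℕ) : ℝ) = (T : ℝ) + 1 := by push_cast; ring
      rw [hcast] at hlt
      have hmpos : 0 < m := by
        rcases lt_or_ge 0 m with h | h
        · exact h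
        · exfalso
          have : m / ((T : ℝ) + 1) ≤ 0 := div_nonpos_of_nonpos_of_nonneg h hT1pos.le
          linarith
      have ha : B (T + 1) * ((T : ℝ) + 1) < m := by
        rw [lt_div_iff₀ hT1pos] at hlt; linarith
      have hBT : m ≤ B T * (T : ℝ) := by
        have := ih
        rw [div_le_iff₀ hTpos] at this; linarith
      have h2 := hstep T hT
      have h5 : cα * xc * B (T + 1) ^ 2 * ((T : ℝ) + 1) ≤ B (T + 1) := by
        nlinarith [mul_le_mul_of_nonneg_left ha.le (mul_nonneg hcx.le hBT1),
          mul_le_mul_of_nonneg_right hmle hBT1]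
      have h6 : ((T : ℝ) + 1) * B T < m + B (T + 1) := by
        nlinarith [mul_le_mul_of_nonneg_right h2 hT1pos.le]
      nlinarith [mul_lt_mul_of_pos_left h6 (mul_pos hTpos hT1pos),
        mul_le_mul_of_nonneg_right hBT (by positivity : (0:ℝ) ≤ ((T : ℝ) + 1) ^ 2),
        mul_lt_mul_of_pos_left ha hTpos, hmpos]
  refine ⟨hmain, ?_⟩
  intro hB1 hsum
  have hmpos : 0 < m := lt_min hB1 (by positivity)
  have h1 : Summable (fun n : ℕ => B (n + 1)) := (summable_nat_add_iff 1).mpr hsum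
  have h2 : Summable (fun n : ℕ => m / ((n : ℝ) + 1)) := by
    apply h1.of_nonneg_of_le (fun n => by positivity)
    intro n
    have := hmain (n + 1) (by omega)
    have hc : ((n + 1 : ℕ) : ℝ) = (n : ℝ) + 1 := by push_cast; ring
    rwa [hc] at this
  have h3 : Summable (fun n : ℕ => 1 / ((n : ℝ) + 1)) := by
    have := h2.mul_left (1 / m)
    convert this using 2 with n
    · rfl
    field_simp
  have h4 : Summable (fun n : ℕ => 1 / ((n : ℕ) : ℝ)) := by
    rw [← summable_nat_add_iff 1]
    convert h3 using 2 with n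
    · rfl
    push_cast; ring
  exact Real.not_summable_one_div_natCast h4
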